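/- For n ≥ 2, the number of admissible maximal laminar families on [n] — that is, maximal laminar families F of subsets of [n] with all members of cardinality at least 2 such that the second-smallest elements of the members of F are pairwise distinct — equals (n−1)!. (These families index a basis of the top cohomology of the complex of trees T_n, which is free of rank (n−1)!.) -/

import Mathlib

/-- A family of subsets of `[n]` is laminar if any two members are disjoint or comparable. -/
def Laminar {n : ℕ} (F : Finset (Finset (Fin n))) : Prop :=
  ∀ S ∈ F, ∀ T ∈ F, S ⊆ T ∨ T ⊆ S ∨ Disjoint S T

/-- A laminar family on `[n]` all of whose members have cardinality at least `2`. -/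
def GoodLaminar (n : ℕ) (F : Finset (Finset (Fin n))) : Prop :=
  Laminar F ∧ ∀ S ∈ F, 2 ≤ S.card

/-- A maximal laminar family of subsets of `[n]` with all members of cardinality `≥ 2`. -/
def MaxGoodLaminar (n : ℕ) (F : Finset (Finset (Fin n))) : Prop :=
  GoodLaminar n F ∧ ∀ G : Finset (Finset (Fin n)), GoodLaminar n G → F ⊆ G → G = F

/-- The second-smallest element of `S` (as an `Option`; `some` whenever `|S| ≥ 2`). -/
def secondmin? {n : ℕ} (S : Finset (Fin n)) : Option (Fin n) :=
  ((S.sort (· ≤ ·)).drop 1).head?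

lemma secondmin?_eq {n : ℕ} (S : Finset (Fin n)) (a b : Fin n) (ha : a ∈ S) (hb : b ∈ S)
    (hab : a < b) (hmin : ∀ x ∈ S, x ≠ a → b ≤ x) : secondmin? S = some b := by
  have hba : b ∈ S.erase a := Finset.mem_erase.2 ⟨hab.ne', hb⟩
  have hsort : S.sort (· ≤ ·) = a :: b :: ((S.erase a).erase b).sort (· ≤ ·) := by
    apply List.Perm.eq_of_pairwise' (Finset.pairwise_sort _ _) ?_ ?_
    · rw [List.pairwise_cons]
      constructor
      · intro x hx
        rcases List.mem_cons.1 hx with rfl | hx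
        · exact hab.le
        · have hx' : x ∈ (S.erase a).erase b := (Finset.mem_sort _).1 hx
          have : x ∈ S := Finset.mem_of_mem_erase (Finset.mem_of_mem_erase hx')
          have hxa : x ≠ a := (Finset.mem_erase.1 (Finset.mem_of_mem_erase hx')).1
          exact le_trans hab.le (hmin x this hxa)
      · rw [List.pairwise_cons]
        refine ⟨?_, Finset.pairwise_sort _ _⟩
        intro x hx
        have hx' : x ∈ (S.erase a).erase b := (Finset.mem_sort _).1 hx
        exact hmin x (Finset.mem_of_mem_erase (Finset.mem_of_mem_erase hx'))
          (Finset.mem_erase.1 (Finset.mem_of_mem_erase hx')).1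
    · rw [← Multiset.coe_eq_coe, Finset.sort_eq]
      have h1 : ((S.erase a).erase b).val = (S.val.erase a).erase b := by
        simp [Finset.erase_val]
      rw [← Multiset.cons_coe, ← Multiset.cons_coe, Finset.sort_eq, h1]
      have hbm : b ∈ S.val.erase a := by
        have : (S.erase a).val = S.val.erase a := by simp [Finset.erase_val]
        rw [← this]; exact hba
      rw [Multiset.cons_erase hbm, Multiset.cons_erase ha]
  rw [secondmin?, hsort]
  rfl

lemma secondmin?_spec {n : ℕ} (S : Finset (Fin n)) (h2 : 2 ≤ S.card) :
    ∃ a b, a ∈ S ∧ b ∈ S ∧ a < b ∧ (∀ x ∈ S, a ≤ x) ∧ (∀ x ∈ S, x ≠ a → b ≤ x) ∧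
      secondmin? S = some b := by
  have hne : S.Nonempty := Finset.card_pos.1 (by omega)
  set a := S.min' hne with ha
  have hea : (S.erase a).Nonempty := by
    rw [← Finset.card_pos, Finset.card_erase_of_mem (S.min'_mem hne)]; omega
  set b := (S.erase a).min' hea with hbdef
  have hbS : b ∈ S.erase a := Finset.min'_mem _ _
  have hbne : b ≠ a := (Finset.mem_erase.1 hbS).1
  have hbmem : b ∈ S := Finset.mem_of_mem_erase hbS
  have hab : a < b := lt_of_le_of_ne (S.min'_le b hbmem) (Ne.symm hbne)
  have hmin : ∀ x ∈ S, x ≠ a → b ≤ x := fun x hx hxa =>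
    Finset.min'_le _ _ (Finset.mem_erase.2 ⟨hxa, hx⟩)
  exact ⟨a, b, S.min'_mem hne, hbmem, hab, fun x hx => S.min'_le x hx, hmin,
    secondmin?_eq S a b (S.min'_mem hne) hbmem hab hmin⟩

def fbAux (f : ℕ → ℕ) (j : ℕ) : ℕ → ℕ → ℕ
  | 0, k => k
  | fuel+1, k => if k < j then k else fbAux f j fuel (f k)

def fb (f : ℕ → ℕ) (j k : ℕ) : ℕ := fbAux f j (k+1) k

section fbsec
variable {f : ℕ → ℕ} (Hf : ∀ x, 1 ≤ x → f x < x) {j : ℕ} (hj : 1 ≤ j)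

include Hf hj

lemma fbAux_indep : ∀ k fuel fuel', k < fuel → k < fuel' →
    fbAux f j fuel k = fbAux f j fuel' k := by
  intro k
  induction k using Nat.strong_induction_on with
  | _ k ih =>
    intro fuel fuel' h1 h2
    match fuel, fuel' with
    | fuel+1, fuel'+1 =>
      simp only [fbAux]
      by_cases hk : k < j
      · simp [hk]
      · simp only [hk, if_false]
        have hfk : f k < k := Hf k (by omega)
        exact ih (f k) hfk _ _ (by omega) (by omega)

lemma fb_eq (k : ℕ) : fb f j k = if k < j then k else fb f j (f k) := by
  by_cases hk : k < j
  · simp [fb, fbAux, hk]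
  · simp only [fb, fbAux, hk, if_false]
    exact fbAux_indep Hf hj (f k) k (f k + 1) (Hf k (by omega)) (by omega)

lemma fb_of_lt {k : ℕ} (h : k < j) : fb f j k = k := by rw [fb_eq Hf hj]; simp [h]

lemma fb_lt (k : ℕ) : fb f j k < j := by
  induction k using Nat.strong_induction_on with
  | _ k ih =>
    rw [fb_eq Hf hj]
    by_cases hk : k < j
    · simp [hk]
    · simp only [hk, if_false]
      exact ih (f k) (Hf k (by omega))

lemma fb_self : fb f j j = f j := by
  rw [fb_eq Hf hj]
  simp only [lt_irrefl, if_false]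
  exact fb_of_lt Hf hj (Hf j hj)

lemma fb_fb {j' : ℕ} (hjj' : j ≤ j') (k : ℕ) : fb f j (fb f j' k) = fb f j k := by
  have hj' : 1 ≤ j' := le_trans hj hjj'
  induction k using Nat.strong_induction_on with
  | _ k ih =>
    by_cases hk : k < j'
    · rw [fb_of_lt Hf hj' hk]
    · rw [fb_eq Hf hj' k]
      simp only [hk, if_false]
      rw [ih (f k) (Hf k (by omega))]
      rw [fb_eq Hf hj k, if_neg (by omega)]

end fbsec

def Sset (n : ℕ) (f : ℕ → ℕ) (j : ℕ) : Finset (Fin n) :=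
  Finset.univ.filter (fun k => fb f j k.val = f j)

section ssets
variable {n : ℕ} {f : ℕ → ℕ}
variable (Hf : ∀ x, 1 ≤ x → f x < x) {j : ℕ} (hj1 : 1 ≤ j) (hjn : j < n)

lemma mem_Sset {k : Fin n} : k ∈ Sset n f j ↔ fb f j k.val = f j := by
  simp [Sset]

include Hf hj1 hjn

lemma fjn : f j < n := lt_trans (Hf j hj1) hjn

lemma fj_mem : (⟨f j, fjn Hf hj1 hjn⟩ : Fin n) ∈ Sset n f j :=
  mem_Sset.2 (fb_of_lt Hf hj1 (Hf j hj1))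

lemma j_mem : (⟨j, hjn⟩ : Fin n) ∈ Sset n f j := mem_Sset.2 (fb_self Hf hj1)

omit hjn in
lemma Sset_lt_eq {k : Fin n} (hk : k ∈ Sset n f j) (hlt : k.val < j) : k.val = f j := by
  rw [mem_Sset, fb_of_lt Hf hj1 hlt] at hk; exact hk

lemma Sset_secondmin : secondmin? (Sset n f j) = some ⟨j, hjn⟩ := by
  apply secondmin?_eq _ ⟨f j, fjn Hf hj1 hjn⟩ _ (fj_mem Hf hj1 hjn) (j_mem Hf hj1 hjn)
  · exact Fin.mk_lt_mk.2 (Hf j hj1)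
  · intro x hx hxa
    by_cases hlt : x.val < j
    · exact absurd (Fin.ext (Sset_lt_eq Hf hj1 hx hlt)) hxa
    · exact Fin.mk_le_mk.2 (by omega)

lemma Sset_card : 2 ≤ (Sset n f j).card :=
  Finset.one_lt_card.2 ⟨_, fj_mem Hf hj1 hjn, _, j_mem Hf hj1 hjn, by
    intro h
    have := congrArg Fin.val h
    simp only at this
    have := Hf j hj1
    omega⟩

omit hjn in
lemma Sset_laminar {j' : ℕ} (hj' : j ≤ j')
    (hnd : ¬ Disjoint (Sset n f j) (Sset n f j' : Finset (Fin n))) : Sset n f j' ⊆ Sset n f j := by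
  obtain ⟨x, hx1, hx2⟩ := Finset.not_disjoint_iff.1 hnd
  intro y hy
  rw [mem_Sset] at hx1 hx2 hy ⊢
  have h1 : fb f j y.val = fb f j (fb f j' y.val) := (fb_fb Hf hj1 hj' _).symm
  rw [hy] at h1
  have h2 : fb f j (f j') = fb f j (fb f j' x.val) := by rw [hx2]
  rw [fb_fb Hf hj1 hj' _, hx1] at h2
  rw [h1, h2]

omit hjn in
lemma self_mem_Sset {k : Fin n} (hk : k.val = j) : k ∈ Sset n f j :=
  mem_Sset.2 (by rw [hk]; exact fb_self Hf hj1)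

omit hjn in
lemma fval_mem_Sset {x : Fin n} (hx : x.val = f j) : x ∈ Sset n f j :=
  mem_Sset.2 (by rw [hx]; exact fb_of_lt Hf hj1 (Hf j hj1))

omit hj1 hjn in
lemma compat_eq_Sset {T : Finset (Fin n)} (hT2 : 2 ≤ T.card)
    (hcomp : ∀ j : ℕ, 1 ≤ j → j < n →
      Sset n f j ⊆ T ∨ T ⊆ Sset n f j ∨ Disjoint (Sset n f j) T) :
    ∃ j : ℕ, 1 ≤ j ∧ j < n ∧ T = Sset n f j := by
  obtain ⟨a, b, haT, hbT, hab, hamin, hbmin, -⟩ := secondmin?_spec T hT2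
  have habv : a.val < b.val := hab
  have hb1 : 1 ≤ b.val := by omega
  have hbn : b.val < n := b.isLt
  refine ⟨b.val, hb1, hbn, ?_⟩
  have hbS : b ∈ Sset n f b.val := self_mem_Sset Hf hb1 rfl
  rcases hcomp b.val hb1 hbn with hsub | hsub | hdis
  · -- Sset ⊆ T
    have hfb : f b.val < b.val := Hf _ hb1
    have hfbn : f b.val < n := by omega
    have haf : a.val = f b.val := by
      have h1 : (⟨f b.val, hfbn⟩ : Fin n) ∈ T := hsub (fval_mem_Sset Hf hb1 rfl)
      by_contra hne
      have h2 : b ≤ ⟨f b.val, hfbn⟩ := hbmin _ h1 (by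
        intro h; exact hne (congrArg Fin.val h).symm)
      have : b.val ≤ f b.val := h2
      omega
    apply Finset.Subset.antisymm _ hsub
    intro k hkT
    by_contra hkS
    -- strong induction on k.val
    have main : ∀ kv : ℕ, ∀ k : Fin n, k.val = kv → k ∈ T → k ∉ Sset n f b.val → False := by
      intro kv
      induction kv using Nat.strong_induction_on with
      | _ kv ih =>
        rintro k rfl hkT hkS
        have hka : k ≠ a := by rintro rfl; exact hkS (fval_mem_Sset Hf hb1 haf)
        have hkb : b.val < k.val := by
          have h := hbmin k hkT hka
          have h' : b.val ≤ k.val := h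
          rcases lt_or_eq_of_le h' with h'' | h''
          · exact h''
          · exact absurd (Fin.ext h''.symm) (fun he => hkS (he ▸ hbS))
        have hk1 : 1 ≤ k.val := by omega
        have hkn : k.val < n := k.isLt
        set c := f k.val with hc
        have hck : c < k.val := Hf _ hk1
        have hcn : c < n := by omega
        have hfbk : fb f b.val k.val = fb f b.val c := by
          rw [fb_eq Hf hb1 k.val, if_neg (by omega)]
        have hkSv : fb f b.val k.val ≠ f b.val := fun h => hkS (mem_Sset.2 h)
        rcases Nat.lt_trichotomy c b.val with hcb | hcb | hcb
        · -- c < b.val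
          have : fb f b.val c = c := fb_of_lt Hf hb1 hcb
          have hcne : c ≠ f b.val := by rw [hfbk, this] at hkSv; exact hkSv
          rcases hcomp k.val hk1 hkn with h1 | h1 | h1
          · have hcT : (⟨c, hcn⟩ : Fin n) ∈ T := h1 (fval_mem_Sset Hf hk1 rfl)
            have := hbmin _ hcT (fun h => hcne ((congrArg Fin.val h).trans haf))
            have hble : b.val ≤ c := this
            omega
          · have := Sset_lt_eq Hf hk1 (h1 hbT) (by omega)
            omega
          · exact (Finset.disjoint_left.1 h1) (self_mem_Sset Hf hk1 rfl) hkT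
        · -- c = b.val
          rw [hfbk, hcb, fb_self Hf hb1] at hkSv
          exact hkSv rfl
        · -- c > b.val
          rcases hcomp k.val hk1 hkn with h1 | h1 | h1
          · have hcT : (⟨c, hcn⟩ : Fin n) ∈ T := h1 (fval_mem_Sset Hf hk1 rfl)
            refine ih c hck ⟨c, hcn⟩ rfl hcT (fun hmem => ?_)
            rw [mem_Sset] at hmem
            exact hkSv (by rw [hfbk]; exact hmem)
          · have := Sset_lt_eq Hf hk1 (h1 hbT) (by omega)
            omega
          · exact (Finset.disjoint_left.1 h1) (self_mem_Sset Hf hk1 rfl) hkT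
    exact main k.val k rfl hkT hkS
  · -- T ⊆ Sset
    have haf : a.val = f b.val := Sset_lt_eq Hf hb1 (hsub haT) habv
    apply Finset.Subset.antisymm hsub
    intro k hkS
    by_contra hkT
    have P : ∀ t : Fin n, t ∈ T → b.val < t.val → Sset n f t.val ⊆ T := by
      intro t htT htb
      have ht1 : 1 ≤ t.val := by omega
      rcases hcomp t.val ht1 t.isLt with h1 | h1 | h1
      · exact h1
      · have h2 := Sset_lt_eq Hf ht1 (h1 haT) (by omega)
        have h3 := Sset_lt_eq Hf ht1 (h1 hbT) htb
        omega
      · exact absurd (Finset.disjoint_left.1 h1 (self_mem_Sset Hf ht1 rfl) htT) (fun _ => by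
          exact (Finset.disjoint_left.1 h1 (self_mem_Sset Hf ht1 rfl) htT))
    have main : ∀ kv : ℕ, ∀ k : Fin n, k.val = kv → k ∈ Sset n f b.val → k ∉ T → False := by
      intro kv
      induction kv using Nat.strong_induction_on with
      | _ kv ih =>
        rintro k rfl hkS hkT
        have hka : k ≠ a := fun h => hkT (h ▸ haT)
        have hkb : k ≠ b := fun h => hkT (h ▸ hbT)
        have hkbv : b.val < k.val := by
          rcases Nat.lt_trichotomy k.val b.val with h | h | h
          · have := Sset_lt_eq Hf hb1 hkS h
            exact absurd (Fin.ext (this.trans haf.symm)) hka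
          · exact absurd (Fin.ext h) hkb
          · exact h
        have hk1 : 1 ≤ k.val := by omega
        have hkn : k.val < n := k.isLt
        set c := f k.val with hc
        have hck : c < k.val := Hf _ hk1
        have hcn : c < n := by omega
        have hkSv : fb f b.val k.val = f b.val := mem_Sset.1 hkS
        have hfbk : fb f b.val c = f b.val := by
          rw [← hkSv, fb_eq Hf hb1 k.val, if_neg (by omega)]
        rcases Nat.lt_trichotomy c b.val with hcb | hcb | hcb
        · -- c < b.val ⟹ c = f b.val = a.val
          have hca : c = a.val := by
            have := fb_of_lt Hf hb1 hcb
            rw [this] at hfbk; omega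
          rcases hcomp k.val hk1 hkn with h1 | h1 | h1
          · exact hkT (h1 (self_mem_Sset Hf hk1 rfl))
          · have := Sset_lt_eq Hf hk1 (h1 hbT) hkbv
            omega
          · exact (Finset.disjoint_left.1 h1) (fval_mem_Sset Hf hk1 (by omega)) haT
        · -- c = b.val
          rcases hcomp k.val hk1 hkn with h1 | h1 | h1
          · exact hkT (h1 (self_mem_Sset Hf hk1 rfl))
          · have := Sset_lt_eq Hf hk1 (h1 haT) (by omega)
            omega
          · exact (Finset.disjoint_left.1 h1) (fval_mem_Sset Hf hk1 (by omega)) hbT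
        · -- c > b.val
          have hcS : (⟨c, hcn⟩ : Fin n) ∈ Sset n f b.val := mem_Sset.2 hfbk
          by_cases hcT : (⟨c, hcn⟩ : Fin n) ∈ T
          · have hsub2 := P _ hcT hcb
            apply hkT
            apply hsub2
            rw [mem_Sset]
            have hc1 : 1 ≤ c := by omega
            rw [fb_eq Hf hc1 k.val, if_neg (by omega), ← hc, fb_self Hf hc1]
          · exact ih c hck ⟨c, hcn⟩ rfl hcS hcT
    exact main k.val k rfl hkS hkT
  · exact absurd (Finset.disjoint_left.1 hdis hbS hbT) (fun _ => by
      exact (Finset.disjoint_left.1 hdis hbS hbT))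
end ssets

section surj
variable {n : ℕ} {F : Finset (Finset (Fin n))} (hn : 2 ≤ n)
variable (hmax : MaxGoodLaminar n F)
variable (hadm : ∀ S ∈ F, ∀ T ∈ F, secondmin? S = secondmin? T → S = T)

include hn hmax

lemma univ_mem : Finset.univ ∈ F := by
  have hG : GoodLaminar n (insert Finset.univ F) := by
    constructor
    · intro S hS T hT
      rcases Finset.mem_insert.1 hS with rfl | hS
      · right; left; exact Finset.subset_univ T
      · rcases Finset.mem_insert.1 hT with rfl | hT
        · left; exact Finset.subset_univ S
        · exact hmax.1.1 S hS T hT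
    · intro S hS
      rcases Finset.mem_insert.1 hS with rfl | hS
      · rw [Finset.card_univ, Fintype.card_fin]; exact hn
      · exact hmax.1.2 S hS
  have := hmax.2 _ hG (Finset.subset_insert _ _)
  rw [← this]
  exact Finset.mem_insert_self _ _

include hadm

lemma attained (jF : Fin n) (hj1 : 1 ≤ jF.val) : ∃ S ∈ F, secondmin? S = some jF := by
  by_contra hun
  push_neg at hun
  classical
  have h0n : (0 : ℕ) < n := by omega
  -- D : minimal member containing jF and an element below jF
  set cand := F.filter (fun S => jF ∈ S ∧ ∃ x ∈ S, x < jF) with hcand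
  have hucand : Finset.univ ∈ cand := by
    refine Finset.mem_filter.2 ⟨univ_mem hn hmax, Finset.mem_univ _, ⟨0, h0n⟩, Finset.mem_univ _, ?_⟩
    rw [Fin.lt_def]
    exact hj1
  obtain ⟨D, hDcand, hDmin⟩ := Finset.exists_min_image cand Finset.card ⟨_, hucand⟩
  obtain ⟨hDF, hjD, x₀, hx₀D, hx₀lt⟩ := Finset.mem_filter.1 hDcand
  have hDne : D.Nonempty := ⟨jF, hjD⟩
  set d := D.min' hDne with hd
  have hdD : d ∈ D := D.min'_mem hDne
  have hdlt : d < jF := lt_of_le_of_lt (D.min'_le _ hx₀D) hx₀lt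
  have hDminimal : ∀ Q ∈ F, jF ∈ Q → (∃ x ∈ Q, x < jF) → Q ⊆ D → Q = D := by
    intro Q hQF hjQ hxQ hQD
    have : Q ∈ cand := Finset.mem_filter.2 ⟨hQF, hjQ, hxQ⟩
    exact Finset.eq_of_subset_of_card_le hQD (hDmin Q this)
  -- E block
  obtain ⟨E, hEj, hEsub, hEmin, hElam, hEor⟩ :
      ∃ E : Finset (Fin n), jF ∈ E ∧ E ⊆ D ∧ (∀ x ∈ E, jF ≤ x) ∧
        (∀ Q ∈ F, Q ⊂ D → Q ⊆ E ∨ Disjoint Q E) ∧ (E ∈ F ∧ E ⊂ D ∨ E = {jF}) := by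
    by_cases hEne : (F.filter (fun S => jF ∈ S ∧ S ⊂ D)).Nonempty
    · obtain ⟨E, hEmem, hEmax⟩ := Finset.exists_max_image _ Finset.card hEne
      obtain ⟨hEF, hEj, hED⟩ := Finset.mem_filter.1 hEmem
      refine ⟨E, hEj, hED.1, ?_, ?_, Or.inl ⟨hEF, hED⟩⟩
      · intro x hxE
        by_contra hlt
        push_neg at hlt
        have : E = D := hDminimal E hEF hEj ⟨x, hxE, hlt⟩ hED.1
        exact absurd this (Finset.ssubset_iff_subset_ne.1 hED).2
      · intro Q hQF hQD
        rcases hmax.1.1 Q hQF E hEF with h | h | h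
        · exact Or.inl h
        · have hQmem : Q ∈ F.filter (fun S => jF ∈ S ∧ S ⊂ D) :=
            Finset.mem_filter.2 ⟨hQF, h hEj, hQD⟩
          have := hEmax Q hQmem
          exact Or.inl (le_of_eq (Finset.eq_of_subset_of_card_le h this).symm)
        · exact Or.inr h
    · refine ⟨{jF}, Finset.mem_singleton_self _, Finset.singleton_subset_iff.2 hjD,
        (by intro x hx; rw [Finset.mem_singleton.1 hx]), ?_, Or.inr rfl⟩
      intro Q hQF hQD
      right
      rw [Finset.disjoint_singleton_right]
      intro hjQ
      exact hEne ⟨Q, Finset.mem_filter.2 ⟨hQF, hjQ, hQD⟩⟩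
  -- V block
  obtain ⟨V, hVd, hVsub, hVj, hVlam, hVor⟩ :
      ∃ V : Finset (Fin n), d ∈ V ∧ V ⊆ D ∧ jF ∉ V ∧
        (∀ Q ∈ F, Q ⊂ D → Q ⊆ V ∨ Disjoint Q V) ∧ (V ∈ F ∧ V ⊂ D ∨ V = {d}) := by
    by_cases hVne : (F.filter (fun S => d ∈ S ∧ S ⊂ D)).Nonempty
    · obtain ⟨V, hVmem, hVmax⟩ := Finset.exists_max_image _ Finset.card hVne
      obtain ⟨hVF, hVd, hVD⟩ := Finset.mem_filter.1 hVmem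
      refine ⟨V, hVd, hVD.1, ?_, ?_, Or.inl ⟨hVF, hVD⟩⟩
      · intro hjV
        have : V = D := hDminimal V hVF hjV ⟨d, hVd, hdlt⟩ hVD.1
        exact absurd this (Finset.ssubset_iff_subset_ne.1 hVD).2
      · intro Q hQF hQD
        rcases hmax.1.1 Q hQF V hVF with h | h | h
        · exact Or.inl h
        · have hQmem : Q ∈ F.filter (fun S => d ∈ S ∧ S ⊂ D) :=
            Finset.mem_filter.2 ⟨hQF, h hVd, hQD⟩
          have := hVmax Q hQmem
          exact Or.inl (le_of_eq (Finset.eq_of_subset_of_card_le h this).symm)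
        · exact Or.inr h
    · refine ⟨{d}, Finset.mem_singleton_self _, Finset.singleton_subset_iff.2 hdD,
        (by rw [Finset.mem_singleton]; exact fun h => absurd (h ▸ hdlt) (lt_irrefl _)), ?_, Or.inr rfl⟩
      intro Q hQF hQD
      right
      rw [Finset.disjoint_singleton_right]
      intro hdQ
      exact hVne ⟨Q, Finset.mem_filter.2 ⟨hQF, hdQ, hQD⟩⟩
  have hjFd : jF ≠ d := fun h => absurd (h ▸ hdlt) (lt_irrefl _)
  have hEV : Disjoint E V := by
    rcases hVor with ⟨hVF, hVD⟩ | rfl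
    · rcases hElam V hVF hVD with h | h
      · exact absurd (hEmin d (h hVd)) (not_le.2 hdlt)
      · exact h.symm
    · rw [Finset.disjoint_singleton_right]
      intro hdE
      exact absurd (hEmin d hdE) (not_le.2 hdlt)
  set T := E ∪ V with hT
  have hjT : jF ∈ T := Finset.mem_union_left _ hEj
  have hdT : d ∈ T := Finset.mem_union_right _ hVd
  have hTD : T ⊆ D := Finset.union_subset hEsub hVsub
  have hTcard : 2 ≤ T.card := Finset.one_lt_card.2 ⟨jF, hjT, d, hdT, hjFd⟩
  have hTF : T ∈ F := by
    have key : ∀ S ∈ F, S ⊆ T ∨ T ⊆ S ∨ Disjoint S T := by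
      intro S hS
      rcases hmax.1.1 S hS D hDF with h | h | h
      · rcases eq_or_ne S D with rfl | hne
        · right; left; exact hTD
        · have h' : S ⊂ D := Finset.ssubset_iff_subset_ne.2 ⟨h, hne⟩
          rcases hElam S hS h' with h1 | h1
          · left; exact h1.trans Finset.subset_union_left
          · rcases hVlam S hS h' with h2 | h2
            · left; exact h2.trans Finset.subset_union_right
            · right; right
              exact Finset.disjoint_union_right.2 ⟨h1, h2⟩
      · right; left; exact hTD.trans h
      · right; right
        exact Finset.disjoint_of_subset_right hTD h
    have hG : GoodLaminar n (insert T F) := by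
      constructor
      · intro S hS S' hS'
        rcases Finset.mem_insert.1 hS with rfl | hS
        · rcases Finset.mem_insert.1 hS' with rfl | hS'
          · left; exact Finset.Subset.refl _
          · rcases key S' hS' with h | h | h
            · right; left; exact h
            · left; exact h
            · right; right; exact h.symm
        · rcases Finset.mem_insert.1 hS' with rfl | hS'
          · exact key S hS
          · exact hmax.1.1 S hS S' hS'
      · intro S hS
        rcases Finset.mem_insert.1 hS with rfl | hS
        · exact hTcard
        · exact hmax.1.2 S hS
    have := hmax.2 _ hG (Finset.subset_insert _ _)
    rw [← this]
    exact Finset.mem_insert_self _ _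
  have hTD2 : T = D := hDminimal T hTF hjT ⟨d, hdT, hdlt⟩ hTD
  -- final contradiction
  obtain ⟨aD, bD, haD, hbD, habD, haminD, hbminD, hsmD⟩ := secondmin?_spec D (hmax.1.2 D hDF)
  have haDd : aD = d := le_antisymm (haminD d hdD) (D.min'_le _ haD)
  have hbDj : bD ≠ jF := by
    intro h
    exact hun D hDF (h ▸ hsmD)
  have hbDT : bD ∈ T := hTD2 ▸ hbD
  rcases Finset.mem_union.1 hbDT with hbE | hbV
  · have h1 : jF ≤ bD := hEmin _ hbE
    have h2 : bD ≤ jF := hbminD jF hjD (by rw [haDd]; exact hjFd)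
    exact hbDj (le_antisymm h2 h1)
  · have hbDd : bD ≠ d := by rw [← haDd]; exact habD.ne'
    have hVF : V ∈ F ∧ V ⊂ D := by
      rcases hVor with h | rfl
      · exact h
      · exact absurd (Finset.mem_singleton.1 hbV) hbDd
    obtain ⟨aV, bV, haV, hbV', habV, haminV, hbminV, hsmV⟩ := secondmin?_spec V (hmax.1.2 V hVF.1)
    have haVd : aV = d := le_antisymm (haminV d hVd) (D.min'_le _ (hVsub haV))
    have hbVD : bV ∈ D := hVsub hbV'
    have h1 : bD ≤ bV := hbminD bV hbVD (by rw [haDd, ← haVd]; exact habV.ne')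
    have h2 : bV ≤ bD := hbminV bD hbV (by rw [haVd]; exact hbDd)
    have : secondmin? V = secondmin? D := by rw [hsmV, hsmD, le_antisymm h2 h1]
    have := hadm V hVF.1 D hDF this
    exact absurd this (Finset.ssubset_iff_subset_ne.1 hVF.2).2
end surj

-- ############ new material ############

def MM (n : ℕ) := ∀ j : Fin n, Fin (max j.val 1)

instance (n : ℕ) : Fintype (MM n) := by unfold MM; infer_instance
instance (n : ℕ) : DecidableEq (MM n) := by unfold MM; infer_instance

def fext {n : ℕ} (g : MM n) (k : ℕ) : ℕ :=
  if h : k < n then (g ⟨k, h⟩).val else k - 1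

lemma Hfext {n : ℕ} (g : MM n) : ∀ x, 1 ≤ x → fext g x < x := by
  intro x hx
  unfold fext
  split
  · rename_i h
    have h2 := (g ⟨x, h⟩).isLt
    simp only [Fin.val_mk] at h2
    have h3 : x ⊔ 1 = x := Nat.max_eq_left hx
    omega
  · omega

def decode {n : ℕ} (g : MM n) : Finset (Finset (Fin n)) :=
  (Finset.univ.filter (fun j : Fin n => 1 ≤ j.val)).image (fun j => Sset n (fext g) j.val)

lemma mem_decode {n : ℕ} {g : MM n} {S : Finset (Fin n)} :
    S ∈ decode g ↔ ∃ j : ℕ, 1 ≤ j ∧ j < n ∧ S = Sset n (fext g) j := by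
  constructor
  · intro h
    obtain ⟨j, hj, rfl⟩ := Finset.mem_image.1 h
    exact ⟨j.val, (Finset.mem_filter.1 hj).2, j.isLt, rfl⟩
  · rintro ⟨j, hj1, hjn, rfl⟩
    exact Finset.mem_image.2 ⟨⟨j, hjn⟩, Finset.mem_filter.2 ⟨Finset.mem_univ _, hj1⟩, rfl⟩

lemma decode_good {n : ℕ} (g : MM n) : GoodLaminar n (decode g) := by
  constructor
  · intro S hS T hT
    obtain ⟨j, hj1, hjn, rfl⟩ := mem_decode.1 hS
    obtain ⟨j', hj'1, hj'n, rfl⟩ := mem_decode.1 hT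
    rcases le_total j j' with h | h
    · by_cases hd : Disjoint (Sset n (fext g) j) (Sset n (fext g) j')
      · right; right; exact hd
      · right; left; exact Sset_laminar (Hfext g) hj1 h hd
    · by_cases hd : Disjoint (Sset n (fext g) j') (Sset n (fext g) j)
      · right; right; exact hd.symm
      · left; exact Sset_laminar (Hfext g) hj'1 h hd
  · intro S hS
    obtain ⟨j, hj1, hjn, rfl⟩ := mem_decode.1 hS
    exact Sset_card (Hfext g) hj1 hjn

lemma decode_max {n : ℕ} (g : MM n) : MaxGoodLaminar n (decode g) := by
  refine ⟨decode_good g, ?_⟩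
  intro G hG hsub
  apply Finset.Subset.antisymm _ hsub
  intro T hT
  have hcomp : ∀ j : ℕ, 1 ≤ j → j < n →
      Sset n (fext g) j ⊆ T ∨ T ⊆ Sset n (fext g) j ∨ Disjoint (Sset n (fext g) j) T := by
    intro j hj1 hjn
    exact hG.1 _ (hsub (mem_decode.2 ⟨j, hj1, hjn, rfl⟩)) T hT
  obtain ⟨j, hj1, hjn, hTeq⟩ := compat_eq_Sset (Hfext g) (hG.2 T hT) hcomp
  exact mem_decode.2 ⟨j, hj1, hjn, hTeq⟩

lemma decode_adm {n : ℕ} (g : MM n) :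
    ∀ S ∈ decode g, ∀ T ∈ decode g, secondmin? S = secondmin? T → S = T := by
  intro S hS T hT h
  obtain ⟨j, hj1, hjn, rfl⟩ := mem_decode.1 hS
  obtain ⟨j', hj'1, hj'n, rfl⟩ := mem_decode.1 hT
  rw [Sset_secondmin (Hfext g) hj1 hjn, Sset_secondmin (Hfext g) hj'1 hj'n] at h
  have : j = j' := congrArg Fin.val (Option.some_injective _ h)
  subst this
  rfl

lemma Sset_min_eq {n : ℕ} {f f' : ℕ → ℕ} (Hf : ∀ x, 1 ≤ x → f x < x)
    (Hf' : ∀ x, 1 ≤ x → f' x < x) {j : ℕ} (hj1 : 1 ≤ j) (hjn : j < n)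
    (h : Sset n f j = Sset n f' j) : f j = f' j := by
  have h1 : f j < j := Hf j hj1
  have hmem : (⟨f j, by omega⟩ : Fin n) ∈ Sset n f' j := by
    rw [← h]; exact fval_mem_Sset Hf hj1 rfl
  exact Sset_lt_eq Hf' hj1 hmem h1

lemma decode_inj {n : ℕ} : Function.Injective (decode (n := n)) := by
  intro g g' h
  funext j
  by_cases hj1 : 1 ≤ j.val
  · have hmem : Sset n (fext g) j.val ∈ decode g' := by
      rw [← h]; exact mem_decode.2 ⟨j.val, hj1, j.isLt, rfl⟩
    obtain ⟨j', hj'1, hj'n, heq⟩ := mem_decode.1 hmem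
    have hsm : some (⟨j.val, j.isLt⟩ : Fin n) = some (⟨j', hj'n⟩ : Fin n) := by
      rw [← Sset_secondmin (Hfext g) hj1 j.isLt, heq, Sset_secondmin (Hfext g') hj'1 hj'n]
    have hjj' : j.val = j' := congrArg Fin.val (Option.some_injective _ hsm)
    subst hjj'
    have := Sset_min_eq (Hfext g) (Hfext g') hj1 j.isLt heq
    apply Fin.ext
    have e1 : fext g j.val = (g j).val := by
      unfold fext
      rw [dif_pos j.isLt]
    have e2 : fext g' j.val = (g' j).val := by
      unfold fext
      rw [dif_pos j.isLt]
    rw [← e1, ← e2]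
    exact this
  · apply Fin.ext
    have h1 := (g j).isLt
    have h2 := (g' j).isLt
    omega

lemma decode_surj {n : ℕ} (hn : 2 ≤ n) {F : Finset (Finset (Fin n))}
    (hmax : MaxGoodLaminar n F)
    (hadm : ∀ S ∈ F, ∀ T ∈ F, secondmin? S = secondmin? T → S = T) :
    ∃ g : MM n, decode g = F := by
  classical
  have H : ∀ (j : Fin n), 1 ≤ j.val → ∃ (S : Finset (Fin n)) (a : Fin n),
      S ∈ F ∧ a ∈ S ∧ j ∈ S ∧ a < j ∧ (∀ x ∈ S, a ≤ x) ∧ (∀ x ∈ S, x ≠ a → j ≤ x) := by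
    intro j hj
    obtain ⟨S, hSF, hsm⟩ := attained hn hmax hadm j hj
    obtain ⟨a, b, haS, hbS, hab, hamin, hbmin, hsm'⟩ := secondmin?_spec S (hmax.1.2 S hSF)
    have hbj : b = j := Option.some_injective _ (hsm'.symm.trans hsm)
    subst hbj
    exact ⟨S, a, hSF, haS, hbS, hab, hamin, hbmin⟩
  choose SS aa hSF haS hjS halt hamin hjmin using H
  set g : MM n := fun j => if h : 1 ≤ j.val then
      ⟨(aa j h).val, by have := halt j h; rw [Fin.lt_def] at this; omega⟩
    else ⟨0, by omega⟩ with hg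
  set f := fext g with hf
  have Hf : ∀ x, 1 ≤ x → f x < x := Hfext g
  have hfval : ∀ (k : Fin n) (hk : 1 ≤ k.val), f k.val = (aa k hk).val := by
    intro k hk
    show fext g k.val = _
    unfold fext
    rw [dif_pos k.isLt]
    have : (⟨k.val, k.isLt⟩ : Fin n) = k := rfl
    rw [this, hg]
    simp only [dif_pos hk]
  have key : ∀ kv : ℕ, ∀ (j : Fin n) (hj : 1 ≤ j.val), ∀ k : Fin n, k.val = kv →
      (k ∈ Sset n f j.val ↔ k ∈ SS j hj) := by
    intro kv
    induction kv using Nat.strong_induction_on with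
    | _ kv ih =>
      rintro j hj k rfl
      have hfj : f j.val = (aa j hj).val := hfval j hj
      have hajlt : (aa j hj).val < j.val := halt j hj
      constructor
      · intro hkS
        rcases Nat.lt_trichotomy k.val j.val with h | h | h
        · have h1 := Sset_lt_eq Hf hj hkS h
          have : k = aa j hj := Fin.ext (h1.trans hfj)
          rw [this]; exact haS j hj
        · have : k = j := Fin.ext h
          rw [this]; exact hjS j hj
        · have hk1 : 1 ≤ k.val := by omega
          have hfk : f k.val = (aa k hk1).val := hfval k hk1
          have hfb : fb f j.val k.val = f j.val := mem_Sset.1 hkS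
          have hcS : fb f j.val (f k.val) = f j.val := by
            rw [← hfb, fb_eq Hf hj k.val, if_neg (by omega)]
          have hmem : aa k hk1 ∈ Sset n f j.val := mem_Sset.2 (by rw [← hfk]; exact hcS)
          have hflt : f k.val < k.val := Hf k.val hk1
          have haSS : aa k hk1 ∈ SS j hj :=
            (ih (aa k hk1).val (by omega) j hj _ rfl).1 hmem
          rcases hmax.1.1 (SS k hk1) (hSF k hk1) (SS j hj) (hSF j hj) with h1 | h1 | h1
          · exact h1 (hjS k hk1)
          · exfalso
            have hjk : j ∈ SS k hk1 := h1 (hjS j hj)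
            have hjaak : j = aa k hk1 := by
              by_contra hne
              have := hjmin k hk1 j hjk hne
              rw [Fin.le_def] at this
              omega
            have haaj : aa j hj ∈ SS k hk1 := h1 (haS j hj)
            have := hamin k hk1 _ haaj
            rw [← hjaak, Fin.le_def] at this
            omega
          · exact absurd (Finset.disjoint_left.1 h1 (haS k hk1) haSS) not_false
      · intro hkF
        rcases Nat.lt_trichotomy k.val j.val with h | h | h
        · have hka : k = aa j hj := by
            by_contra hne
            have := hjmin j hj k hkF hne
            rw [Fin.le_def] at this
            omega
          apply mem_Sset.2
          rw [fb_of_lt Hf hj h, hka, hfj]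
        · exact self_mem_Sset Hf hj h
        · have hk1 : 1 ≤ k.val := by omega
          have hfk : f k.val = (aa k hk1).val := hfval k hk1
          have hflt : f k.val < k.val := Hf k.val hk1
          rcases hmax.1.1 (SS k hk1) (hSF k hk1) (SS j hj) (hSF j hj) with h1 | h1 | h1
          · have haaS : aa k hk1 ∈ SS j hj := h1 (haS k hk1)
            have haalt : (aa k hk1).val < k.val := by rw [← hfk]; exact hflt
            have hmem : aa k hk1 ∈ Sset n f j.val :=
              (ih (aa k hk1).val haalt j hj _ rfl).2 haaS
            apply mem_Sset.2
            rw [fb_eq Hf hj k.val, if_neg (by omega), hfk]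
            exact mem_Sset.1 hmem
          · have hjk : j ∈ SS k hk1 := h1 (hjS j hj)
            have hjaak : j = aa k hk1 := by
              by_contra hne
              have := hjmin k hk1 j hjk hne
              rw [Fin.le_def] at this
              omega
            apply mem_Sset.2
            rw [fb_eq Hf hj k.val, if_neg (by omega), hfk, ← hjaak]
            exact fb_self Hf hj
          · exact absurd (Finset.disjoint_left.1 h1 (hjS k hk1) hkF) not_false
  have hSset_eq : ∀ (j : Fin n) (hj : 1 ≤ j.val), Sset n f j.val = SS j hj := by
    intro j hj
    ext k
    exact key k.val j hj k rfl
  refine ⟨g, ?_⟩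
  have hsub : decode g ⊆ F := by
    intro S hS
    obtain ⟨j, hj1, hjn, rfl⟩ := mem_decode.1 hS
    rw [show Sset n (fext g) j = Sset n f j from rfl]
    have : j = (⟨j, hjn⟩ : Fin n).val := rfl
    rw [this, hSset_eq ⟨j, hjn⟩ hj1]
    exact hSF _ _
  exact ((decode_max g).2 F hmax.1 hsub).symm

lemma prod_max_range : ∀ n : ℕ, 1 ≤ n → ∏ i ∈ Finset.range n, max i 1 = Nat.factorial (n - 1) := by
  intro n
  induction n with
  | zero => omega
  | succ m ih =>
    intro _
    rcases Nat.eq_zero_or_pos m with rfl | hm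
    · simp [Nat.factorial]
    · rw [Finset.prod_range_succ, ih hm]
      have h1 : max m 1 = m := by omega
      rw [h1]
      have h2 : m + 1 - 1 = (m - 1) + 1 := by omega
      rw [h2, Nat.factorial_succ]
      have : m - 1 + 1 = m := by omega
      rw [this, Nat.mul_comm]

/-- For `n ≥ 2`, the number of admissible maximal laminar families on `[n]` — maximal laminar
families of subsets of `[n]` with all members of cardinality `≥ 2` whose members have pairwise
distinct second-smallest elements — equals `(n - 1)!`. -/
theorem card_admissible_maximal_laminar (n : ℕ) (hn : 2 ≤ n) :
    {F : Finset (Finset (Fin n)) | MaxGoodLaminar n F ∧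
        ∀ S ∈ F, ∀ T ∈ F, secondmin? S = secondmin? T → S = T}.ncard
      = Nat.factorial (n - 1) := by
  classical
  have hset : {F : Finset (Finset (Fin n)) | MaxGoodLaminar n F ∧
      ∀ S ∈ F, ∀ T ∈ F, secondmin? S = secondmin? T → S = T}
      = ↑((Finset.univ : Finset (MM n)).image decode) := by
    ext F
    simp only [Set.mem_setOf_eq, Finset.coe_image, Finset.coe_univ, Set.image_univ,
      Set.mem_range]
    constructor
    · rintro ⟨hmax, hadm⟩
      exact decode_surj hn hmax hadm
    · rintro ⟨g, rfl⟩
      exact ⟨decode_max g, decode_adm g⟩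
  rw [hset, Set.ncard_coe_finset, Finset.card_image_of_injective _ decode_inj,
    Finset.card_univ]
  have : Fintype.card (MM n) = ∏ j : Fin n, max j.val 1 := by
    rw [show Fintype.card (MM n) = Fintype.card (∀ j : Fin n, Fin (max j.val 1)) from rfl,
      Fintype.card_pi]
    simp
  rw [this, Fin.prod_univ_eq_prod_range (fun i => max i 1) n]
  exact prod_max_range n (by omega)
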